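/- The base locus of the quadratic Cremona transformation r_2 of P^3 is exactly the union of the reducible conic {x_0 = 0, x_1 x_2 = 0} and the point [1:1:1:1]: all four coordinate polynomials of r_2 vanish at [x_0:x_1:x_2:x_3] if and only if either (x_0 = 0 and x_1 x_2 = 0) or x_0 = x_1 = x_2 = x_3. -/
import Mathlib


/-- The quadratic Cremona transformation `r₂`, in affine coordinates on `ℂ⁴`. -/
def r2fun (x : Fin 4 → ℂ) : Fin 4 → ℂ :=
  ![(x 1 - x 0) * (x 2 - x 0), x 1 * (x 2 - x 0), x 2 * (x 1 - x 0),
    x 1 * x 2 - x 0 * x 3]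

/-- The base locus of `r₂` is exactly the union of the reducible conic
`{x₀ = 0, x₁x₂ = 0}` and the point `[1:1:1:1]`. -/
theorem stmt_9 (x : Fin 4 → ℂ) (hx : x ≠ 0) :
    (∀ i : Fin 4, r2fun x i = 0) ↔
      ((x 0 = 0 ∧ x 1 * x 2 = 0) ∨ (x 0 = x 1 ∧ x 1 = x 2 ∧ x 2 = x 3)) := by
  constructor
  · intro h
    have h0 := h 0
    have h1 := h 1
    have h2 := h 2
    have h3 := h 3
    simp only [r2fun, Matrix.cons_val_zero, Matrix.cons_val_one, Matrix.head_cons,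
      Matrix.cons_val_two, Matrix.tail_cons, Matrix.cons_val_three] at h0 h1 h2 h3
    rcases mul_eq_zero.mp h0 with h | h
    · have e1 : x 1 = x 0 := by linear_combination h
      rcases mul_eq_zero.mp h1 with h' | h'
      · left
        constructor
        · rw [← e1]; exact h'
        · rw [h']; ring
      · have e2 : x 2 = x 0 := by linear_combination h'
        by_cases hz : x 0 = 0
        · left; exact ⟨hz, by rw [e1, e2, hz]; ring⟩
        · right
          refine ⟨e1.symm, by rw [e1, e2], ?_⟩
          have : x 0 * (x 0 - x 3) = 0 := by linear_combination h3 - x 2 * h - x 0 * h'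
          rcases mul_eq_zero.mp this with h'' | h''
          · exact absurd h'' hz
          · rw [e2]; linear_combination h''
    · have e2 : x 2 = x 0 := by linear_combination h
      rcases mul_eq_zero.mp h2 with h' | h'
      · left
        constructor
        · rw [← e2]; exact h'
        · rw [h']; ring
      · have e1 : x 1 = x 0 := by linear_combination h'
        by_cases hz : x 0 = 0
        · left; exact ⟨hz, by rw [e1, e2, hz]; ring⟩
        · right
          refine ⟨e1.symm, by rw [e1, e2], ?_⟩
          have : x 0 * (x 0 - x 3) = 0 := by linear_combination h3 - x 1 * h - x 0 * h'
          rcases mul_eq_zero.mp this with h'' | h''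
          · exact absurd h'' hz
          · rw [e2]; linear_combination h''
  · rintro (⟨h0, h12⟩ | ⟨e1, e2, e3⟩) i
    · fin_cases i <;>
        simp only [r2fun, Matrix.cons_val_zero, Matrix.cons_val_one, Matrix.head_cons,
          Matrix.cons_val_two, Matrix.tail_cons, Matrix.cons_val_three] <;>
        rcases mul_eq_zero.mp h12 with h | h <;>
        rw [h0] <;> simp [h] <;> ring
    · fin_cases i <;>
        simp only [r2fun, Matrix.cons_val_zero, Matrix.cons_val_one, Matrix.head_cons,
          Matrix.cons_val_two, Matrix.tail_cons, Matrix.cons_val_three] <;>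
        rw [← e3, ← e2, ← e1] <;> ring_nf <;> simp
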